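/- Let g be a nilpotent real Lie algebra of dimension 2p+1 (p ≥ 1) with contact form ω. Then the bilinear form θ defined on the quotient Lie algebra g/Z(g) by θ(X̄, Ȳ) = ω([X,Y]) (where X̄ denotes the class of X modulo the center Z(g)) is well defined (independent of the choice of representatives), alternating, nondegenerate, and satisfies the 2-cocycle identity θ([X̄,Ȳ],Z̄) + θ([Ȳ,Z̄],X̄) + θ([Z̄,X̄],Ȳ) = 0; that is, g/Z(g) is a symplectic Lie algebra. -/

import Mathlib

/-- Let `g` be a nilpotent real Lie algebra of dimension `2p+1` (`p ≥ 1`) with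
contact form `ω`.  Then the bilinear form `θ` on `g/Z(g)` defined by `θ(X̄,Ȳ) = ω ⁅X,Y⁆` is well
defined, alternating, nondegenerate, and is a 2-cocycle: `g/Z(g)` is a symplectic Lie algebra. -/
theorem quotient_center_symplectic_of_contact_nilpotent
    (L : Type*) [LieRing L] [LieAlgebra ℝ L] [FiniteDimensional ℝ L]
    [LieRing.IsNilpotent L]
    (p : ℕ) (hp : 1 ≤ p) (hdim : Module.finrank ℝ L = 2 * p + 1)
    (ω : L →ₗ[ℝ] ℝ) (hω : ω ≠ 0)
    (hcontact : ∀ X : L, ω X = 0 → (∀ Y : L, ω Y = 0 → ω ⁅X, Y⁆ = 0) → X = 0) :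
    ∃ θ : (L ⧸ LieAlgebra.center ℝ L) →ₗ[ℝ] (L ⧸ LieAlgebra.center ℝ L) →ₗ[ℝ] ℝ,
      (∀ X Y : L,
        θ (LieSubmodule.Quotient.mk' (LieAlgebra.center ℝ L) X)
          (LieSubmodule.Quotient.mk' (LieAlgebra.center ℝ L) Y) = ω ⁅X, Y⁆) ∧
      (∀ U : L ⧸ LieAlgebra.center ℝ L, θ U U = 0) ∧
      (∀ U : L ⧸ LieAlgebra.center ℝ L, (∀ V, θ U V = 0) → U = 0) ∧
      (∀ U V W : L ⧸ LieAlgebra.center ℝ L,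
        θ ⁅U, V⁆ W + θ ⁅V, W⁆ U + θ ⁅W, U⁆ V = 0) := by
  classical
  set Z := LieAlgebra.center ℝ L with hZ
  set N : Submodule ℝ L := Z.toSubmodule with hN
  have hmemZ : ∀ x : L, x ∈ Z ↔ ∀ y : L, ⁅y, x⁆ = 0 := fun x =>
    LieModule.mem_maxTrivSubmodule ℝ L L x
  have hmemZ' : ∀ x : L, x ∈ Z → ∀ y : L, ⁅x, y⁆ = 0 := by
    intro x hx y
    rw [← lie_skew, (hmemZ x).mp hx y, neg_zero]
  set b : L →ₗ[ℝ] L →ₗ[ℝ] ℝ := LinearMap.mk₂ ℝ (fun X Y => ω ⁅X, Y⁆)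
    (by intros; simp) (by intros; simp) (by intros; simp) (by intros; simp) with hb
  have hinner : ∀ X : L, N ≤ LinearMap.ker (b X) := by
    intro X z hz
    have hzZ : z ∈ Z := hz
    have : ⁅X, z⁆ = 0 := (hmemZ z).mp hzZ X
    simp [hb, this]
  set g : L →ₗ[ℝ] (L ⧸ N) →ₗ[ℝ] ℝ :=
    { toFun := fun X => N.liftQ (b X) (hinner X)
      map_add' := by
        intro X Y
        apply LinearMap.ext
        intro u
        induction u using Submodule.Quotient.induction_on with
        | H y => simp [Submodule.liftQ_apply]
      map_smul' := by
        intro c X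
        apply LinearMap.ext
        intro u
        induction u using Submodule.Quotient.induction_on with
        | H y => simp [Submodule.liftQ_apply] } with hg
  have houter : N ≤ LinearMap.ker g := by
    intro z hz
    have hzZ : z ∈ Z := hz
    simp only [LinearMap.mem_ker]
    apply LinearMap.ext
    intro u
    induction u using Submodule.Quotient.induction_on with
    | H y => simp [hg, Submodule.liftQ_apply, hb, hmemZ' z hzZ y]
  set θ : (L ⧸ Z) →ₗ[ℝ] (L ⧸ Z) →ₗ[ℝ] ℝ := N.liftQ g houter with hθ
  have happ : ∀ X Y : L,
      θ (LieSubmodule.Quotient.mk' Z X) (LieSubmodule.Quotient.mk' Z Y) = ω ⁅X, Y⁆ := by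
    intro X Y
    show (N.liftQ g houter) (Submodule.Quotient.mk X) (Submodule.Quotient.mk Y) = ω ⁅X, Y⁆
    rw [Submodule.liftQ_apply]
    show N.liftQ (b X) (hinner X) (Submodule.Quotient.mk Y) = ω ⁅X, Y⁆
    rw [Submodule.liftQ_apply]
    simp [hb]
  refine ⟨θ, happ, ?_, ?_, ?_⟩
  · intro U
    obtain ⟨x, rfl⟩ := LieSubmodule.Quotient.surjective_mk' Z U
    rw [happ]
    simp
  · -- nondegeneracy
    intro U hU
    obtain ⟨x, rfl⟩ := LieSubmodule.Quotient.surjective_mk' Z U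
    have hx : ∀ Y : L, ω ⁅x, Y⁆ = 0 := by
      intro Y
      have := hU (LieSubmodule.Quotient.mk' Z Y)
      rwa [happ] at this
    obtain ⟨v, hv⟩ : ∃ v, ω v ≠ 0 := by
      by_contra h
      push_neg at h
      exact hω (LinearMap.ext fun v => by simp [h v])
    have hnt : Nontrivial L := ⟨v, 0, fun h => hv (by simp [h])⟩
    have hcnt : Nontrivial Z := LieAlgebra.non_trivial_center_of_isNilpotent (R := ℝ) (L := L)
    obtain ⟨z₀, hz₀⟩ := exists_ne (0 : Z)
    have hz₀c : ∀ y : L, ⁅(z₀ : L), y⁆ = 0 := hmemZ' z₀ z₀.2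
    have hz₀ne : (z₀ : L) ≠ 0 := fun h => hz₀ (Subtype.ext h)
    have hωz₀ : ω (z₀ : L) ≠ 0 := by
      intro h
      exact hz₀ne (hcontact _ h (fun Y _ => by rw [hz₀c Y, map_zero]))
    set c : ℝ := ω x / ω (z₀ : L) with hc
    have hx0 : x - c • (z₀ : L) = 0 := by
      apply hcontact
      · rw [map_sub, map_smul, smul_eq_mul, hc, div_mul_cancel₀ _ hωz₀, sub_self]
      · intro Y _
        simp [sub_lie, map_sub, hx Y, hz₀c Y]
    have hxc : x = c • (z₀ : L) := by rwa [sub_eq_zero] at hx0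
    rw [LieSubmodule.Quotient.mk_eq_zero, hxc]
    exact Z.smul_mem c z₀.2
  · -- cocycle
    intro U V W
    obtain ⟨x, rfl⟩ := LieSubmodule.Quotient.surjective_mk' Z U
    obtain ⟨y, rfl⟩ := LieSubmodule.Quotient.surjective_mk' Z V
    obtain ⟨z, rfl⟩ := LieSubmodule.Quotient.surjective_mk' Z W
    have hbr : ∀ a b : L, ⁅LieSubmodule.Quotient.mk' Z a, LieSubmodule.Quotient.mk' Z b⁆ =
        LieSubmodule.Quotient.mk' Z ⁅a, b⁆ := fun a b =>
      (LieSubmodule.Quotient.mk_bracket Z a b).symm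
    rw [hbr, hbr, hbr, happ, happ, happ]
    rw [← map_add, ← map_add]
    have : ⁅⁅x, y⁆, z⁆ + ⁅⁅y, z⁆, x⁆ + ⁅⁅z, x⁆, y⁆ = (0 : L) := by
      rw [← lie_skew ⁅x, y⁆ z, ← lie_skew ⁅y, z⁆ x, ← lie_skew ⁅z, x⁆ y, ← neg_add, ← neg_add,
        neg_eq_zero]
      exact lie_jacobi z x y
    rw [this, map_zero]
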